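/- arXiv:2605.21162 — 2 statements merged into one kernel-verified Lean document; each statement's English description precedes it below -/
import Mathlib

section
/- Let f ∈ H, Q ∈ V and u_h ∈ V with u_h − Q ∈ V₀. Suppose a(u_h, v) = ⟨f, L v⟩_H for all v ∈ V₀ and ⟨L Q, L v⟩_H = ⟨f, L v⟩_H for all v ∈ V₀. Then a(u_h − Q, u_h − Q) ≤ s(Q, Q). (End-to-end abstract version of Lemma 5.1 combined with Theorem 6.1: the energy-norm error of the LS-WG solution against the projection of the exact solution is controlled by the stabilizer evaluated at that projection, ||| u_h − Q_h u |||² ≤ s(Q_h u, Q_h u).) -/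
open scoped RealInnerProductSpace

/-- End-to-end abstract error estimate (Lemma 5.1 + Theorem 6.1): the LS-WG energy-norm
error against the projection `Q` of the exact solution satisfies
`a(u_h - Q, u_h - Q) ≤ s(Q, Q)`. -/
theorem lswg_energy_error_bound_full
    {H V : Type*} [NormedAddCommGroup H] [InnerProductSpace ℝ H]
    [AddCommGroup V] [Module ℝ V]
    (V₀ : Submodule ℝ V)
    (L : V →ₗ[ℝ] H) (s : V →ₗ[ℝ] V →ₗ[ℝ] ℝ)
    (hs_symm : ∀ u v : V, s u v = s v u)
    (hs_pos : ∀ v : V, 0 ≤ s v v)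
    (f : H) (Q u_h : V) (hmem : u_h - Q ∈ V₀)
    (hscheme : ∀ v ∈ V₀, ⟪L u_h, L v⟫ + s u_h v = ⟪f, L v⟫)
    (hconsist : ∀ v ∈ V₀, ⟪L Q, L v⟫ = ⟪f, L v⟫) :
    ⟪L (u_h - Q), L (u_h - Q)⟫ + s (u_h - Q) (u_h - Q) ≤ s Q Q := by
  set e := u_h - Q with he
  have h1 : ⟪L u_h, L e⟫ + s u_h e = ⟪L Q, L e⟫ := by
    rw [hscheme e hmem, hconsist e hmem]
  -- a(e,e) = - s Q e
  have hLe : ⟪L e, L e⟫ = - s u_h e := by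
    have : L e = L u_h - L Q := by rw [he, map_sub]
    rw [this, inner_sub_left]
    have h2 : ⟪L u_h, L e⟫ - ⟪L Q, L e⟫ = - s u_h e := by linarith
    rw [this] at h2; exact h2
  have hse : s e e = s u_h e - s Q e := by
    simp only [he, map_sub, LinearMap.sub_apply]
    ring
  set A := ⟪L e, L e⟫ + s e e with hA
  have hkey : A = - s Q e := by rw [hA, hLe, hse]; ring
  have hA0 : 0 ≤ A := by
    have := real_inner_self_nonneg (x := L e)
    have := hs_pos e
    linarith
  -- Cauchy-Schwarz for s
  have hCS : (s Q e) ^ 2 ≤ s Q Q * s e e := by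
    have hq : ∀ t : ℝ, 0 ≤ s e e * (t * t) + (2 * s Q e) * t + s Q Q := by
      intro t
      have h := hs_pos (Q + t • e)
      simp only [map_add, map_smul, LinearMap.add_apply, LinearMap.smul_apply,
        smul_eq_mul] at h
      have hsy := hs_symm Q e
      have heq : s e e * (t * t) + (2 * s Q e) * t + s Q Q
          = s Q Q + t * s e Q + t * (s Q e + t * s e e) := by rw [hsy]; ring
      linarith [h, heq.ge, heq.le]
    have hd := discrim_le_zero hq
    rw [discrim] at hd
    nlinarith
  have hseA : s e e ≤ A := by
    have := real_inner_self_nonneg (x := L e); linarith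
  -- A^2 = (s Q e)^2 ≤ s Q Q * s e e ≤ s Q Q * A
  have hQQ : 0 ≤ s Q Q := hs_pos Q
  have hA2 : A ^ 2 ≤ s Q Q * A := by
    calc A ^ 2 = (s Q e) ^ 2 := by rw [hkey]; ring
    _ ≤ s Q Q * s e e := hCS
    _ ≤ s Q Q * A := by exact mul_le_mul_of_nonneg_left hseA hQQ
  rcases eq_or_lt_of_le hA0 with h | h
  · rw [hA] at h; linarith
  · have := (mul_le_mul_iff_of_pos_right h).mp (by nlinarith : A * A ≤ s Q Q * A)
    rw [hA] at this; linarith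
end

section
/- Let a < b be real numbers, m ≥ 1 an integer, and w : ℝ → ℝ twice continuously differentiable. Let Q₀ denote the orthogonal projection of L²((a,b)) onto the finite-dimensional subspace P_m of (classes of) real polynomial functions of degree at most m. Then Q₀(w'') is the one-dimensional discrete weak Laplacian of the projected triple {Q₀ w, (w(a), w(b)), (w'(a), w'(b))}; that is, for every real polynomial q of degree at most m, ∫_a^b Q₀(w'')(x)·q(x) dx = ∫_a^b (Q₀ w)(x)·q''(x) dx − (w(b)q'(b) − w(a)q'(a)) + (w'(b)q(b) − w'(a)q(a)). (One-dimensional instance of the commutative property Δ_w(Q_h w) = Q₀(Δ w), Lemma 4.1.) -/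
/-- One-dimensional commutative property `Δ_w (Q_h w) = Q₀ (Δ w)` (Lemma 4.1).

Here the `L²((a,b))`-projection `Q₀` onto polynomials of degree at most `m` is
characterized by its defining orthogonality property: `pw` (resp. `pw''`) is the polynomial
of degree at most `m` whose difference with `w` (resp. `w''`) is `L²((a,b))`-orthogonal to
all polynomials of degree at most `m`.  The conclusion states that `pw'' = Q₀(w'')`
satisfies the defining relation of the discrete weak Laplacian of the projected triple
`{Q₀ w, (w(a), w(b)), (w'(a), w'(b))}`. -/
theorem lswg_commutative_property_1d
    (a b : ℝ) (hab : a < b) (m : ℕ) (hm : 1 ≤ m)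
    (w : ℝ → ℝ) (hw : ContDiff ℝ 2 w)
    (pw : Polynomial ℝ) (hpw_deg : pw.degree ≤ (m : ℕ))
    (hpw : ∀ q : Polynomial ℝ, q.degree ≤ (m : ℕ) →
      ∫ x in a..b, (w x - pw.eval x) * q.eval x = 0)
    (pw'' : Polynomial ℝ) (hpw''_deg : pw''.degree ≤ (m : ℕ))
    (hpw'' : ∀ q : Polynomial ℝ, q.degree ≤ (m : ℕ) →
      ∫ x in a..b, (deriv (deriv w) x - pw''.eval x) * q.eval x = 0) :
    ∀ q : Polynomial ℝ, q.degree ≤ (m : ℕ) →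
      ∫ x in a..b, pw''.eval x * q.eval x
        = (∫ x in a..b, pw.eval x * (q.derivative.derivative).eval x)
          - (w b * q.derivative.eval b - w a * q.derivative.eval a)
          + (deriv w b * q.eval b - deriv w a * q.eval a) := by

  intro q hq
  have hq' : q.derivative.degree ≤ (m : ℕ) := le_trans q.degree_derivative_le hq
  have hq'' : q.derivative.derivative.degree ≤ (m : ℕ) :=
    le_trans q.derivative.degree_derivative_le hq'
  have hw1 : ContDiff ℝ 1 (deriv w) := by
    have h2 : ContDiff ℝ ((1 : ℕ) + 1) w := by exact_mod_cast hw
    exact_mod_cast (contDiff_succ_iff_deriv.mp h2).2.2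
  have hcw : Continuous w := hw.continuous
  have hcw' : Continuous (deriv w) := hw1.continuous
  have hcw'' : Continuous (deriv (deriv w)) := hw1.continuous_deriv le_rfl
  have hdw : ∀ x ∈ Set.uIcc a b, HasDerivAt w (deriv w x) x := fun x _ =>
    ((hw.differentiable (by norm_num)) x).hasDerivAt
  have hdw' : ∀ x ∈ Set.uIcc a b, HasDerivAt (deriv w) (deriv (deriv w) x) x := fun x _ =>
    ((hw1.differentiable (by norm_num)) x).hasDerivAt
  have hiq : ∀ p : Polynomial ℝ, IntervalIntegrable (fun x => p.eval x)
      MeasureTheory.volume a b := fun p => p.continuous_aeval.intervalIntegrable a b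
  -- Step 1: replace pw'' by w''
  have e1 : ∫ x in a..b, pw''.eval x * q.eval x = ∫ x in a..b, deriv (deriv w) x * q.eval x := by
    have hi1 : IntervalIntegrable (fun x => deriv (deriv w) x * q.eval x)
        MeasureTheory.volume a b := (hcw''.mul q.continuous_aeval).intervalIntegrable a b
    have hi2 : IntervalIntegrable (fun x => pw''.eval x * q.eval x)
        MeasureTheory.volume a b := (pw''.continuous_aeval.mul q.continuous_aeval).intervalIntegrable a b
    have h := hpw'' q hq
    have h0 : (∫ x in a..b, deriv (deriv w) x * q.eval x)
        - ∫ x in a..b, pw''.eval x * q.eval x = 0 := by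
      rw [← intervalIntegral.integral_sub hi1 hi2]
      simpa [sub_mul] using h
    linarith
  -- Step 4: replace w by pw against q''
  have e4 : ∫ x in a..b, w x * q.derivative.derivative.eval x
      = ∫ x in a..b, pw.eval x * q.derivative.derivative.eval x := by
    have hi1 : IntervalIntegrable (fun x => w x * q.derivative.derivative.eval x)
        MeasureTheory.volume a b := (hcw.mul q.derivative.derivative.continuous_aeval).intervalIntegrable a b
    have hi2 : IntervalIntegrable (fun x => pw.eval x * q.derivative.derivative.eval x)
        MeasureTheory.volume a b :=
      (pw.continuous_aeval.mul q.derivative.derivative.continuous_aeval).intervalIntegrable a b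
    have h := hpw q.derivative.derivative hq''
    have h0 : (∫ x in a..b, w x * q.derivative.derivative.eval x)
        - ∫ x in a..b, pw.eval x * q.derivative.derivative.eval x = 0 := by
      rw [← intervalIntegral.integral_sub hi1 hi2]
      simpa [sub_mul] using h
    linarith
  -- Step 2: integrate by parts once
  have e2 : ∫ x in a..b, q.eval x * deriv (deriv w) x
      = q.eval b * deriv w b - q.eval a * deriv w a
        - ∫ x in a..b, q.derivative.eval x * deriv w x :=
    intervalIntegral.integral_mul_deriv_eq_deriv_mul
      (fun x _ => q.hasDerivAt x) hdw' (hiq _) (hcw''.intervalIntegrable a b)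
  -- Step 3: integrate by parts again
  have e3 : ∫ x in a..b, q.derivative.eval x * deriv w x
      = q.derivative.eval b * w b - q.derivative.eval a * w a
        - ∫ x in a..b, q.derivative.derivative.eval x * w x :=
    intervalIntegral.integral_mul_deriv_eq_deriv_mul
      (fun x _ => q.derivative.hasDerivAt x) hdw (hiq _) (hcw'.intervalIntegrable a b)
  have c1 : ∫ x in a..b, deriv (deriv w) x * q.eval x
      = ∫ x in a..b, q.eval x * deriv (deriv w) x := by
    simp [mul_comm]
  have c2 : ∫ x in a..b, q.derivative.derivative.eval x * w x
      = ∫ x in a..b, w x * q.derivative.derivative.eval x := by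
    simp [mul_comm]
  rw [e1, c1, e2, e3, c2, e4]
  ring
end
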